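/- Under the hypotheses that V is conditionally independent of (Y, U) given S, and that the classifier assigns x to y_i iff P(y_i, x) > P(y_j, x) for all j ≠ i: if the array Δ^{ij}_S(u) has both a strictly positive entry and a strictly negative entry for some j, then in general u can be neither decided positive nor negative without examining V; concretely, there exists a distribution P and conditionals P(V | S) such that some extension (u, v) is classified y_i and another extension (u, v') is not. -/
import Mathlib


open Finset in
/-- tightness of Theorem 1: with `V ⊥ (Y,U) | S` and strict-argmax
classification (`x` is assigned `y_i` iff `P(y_i, x) > P(y_j, x)` for all `j ≠ i`),
if the array `Δ^{ij}_S(u)` has both a strictly positive and a strictly negative entry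
then `u` can in general be decided neither positive nor negative without examining `V`:
there exist a marginal distribution `Q = P(Y, U, S)` (with mixed-sign `Δ^{ij}_S(u)`)
and conditionals `K = P(V | S)` (taking `V` with as many states as `S`), inducing the
joint `P(y,u,s,v) = Q(y,u,s) · K(s,v)`, such that some extension `(u, v)` is classified
`y_i` while another extension `(u, v')` is not. -/
theorem stmt16 {k : ℕ} (hk : 2 ≤ k) (i : Fin k)
    (S : Type) [Fintype S] (s₁ s₂ : S) (hs : s₁ ≠ s₂)
    (U : Type) [Fintype U] (u : U) :
    ∃ (Q : Fin k → U → S → ℝ) (K : S → S → ℝ) (j : Fin k), j ≠ i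
      -- `Q` is a probability distribution over (Y, U, S)
      ∧ (∀ y u' s, 0 ≤ Q y u' s) ∧ (∑ y, ∑ u', ∑ s, Q y u' s = 1)
      -- `K` gives a conditional distribution P(V | S)
      ∧ (∀ s v, 0 ≤ K s v) ∧ (∀ s, ∑ v, K s v = 1)
      -- the array Δ^{ij}_S(u) has a strictly positive and a strictly negative entry
      ∧ (∃ s, 0 < Q i u s - Q j u s) ∧ (∃ s, Q i u s - Q j u s < 0)
      -- some extension (u, v) is classified y_i …
      ∧ (∃ v, ∀ j' : Fin k, j' ≠ i →
          (∑ s, Q j' u s * K s v) < (∑ s, Q i u s * K s v))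
      -- … and another extension (u, v') is not
      ∧ (∃ v', ¬ ∀ j' : Fin k, j' ≠ i →
          (∑ s, Q j' u s * K s v') < (∑ s, Q i u s * K s v')) := by
  classical
  have h1 : 1 < k := hk
  have h0 : 0 < k := by omega
  set j : Fin k := if i = ⟨0, h0⟩ then ⟨1, h1⟩ else ⟨0, h0⟩ with hj
  have hji : j ≠ i := by
    intro hc
    by_cases h : i = ⟨0, h0⟩
    · rw [hj, if_pos h, h] at hc
      exact absurd (congrArg Fin.val hc) (by simp)
    · rw [hj, if_neg h] at hc
      exact h hc.symm
  set Q : Fin k → U → S → ℝ := fun y u' s =>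
    (if y = i ∧ u' = u ∧ s = s₁ then (1:ℝ)/2 else 0)
    + (if y = j ∧ u' = u ∧ s = s₂ then (1:ℝ)/2 else 0) with hQ
  set K : S → S → ℝ := fun s v => if v = s then (1:ℝ) else 0 with hK
  have hQnn : ∀ y u' s, 0 ≤ Q y u' s := by
    intro y u' s
    have : (0:ℝ) ≤ (if y = i ∧ u' = u ∧ s = s₁ then (1:ℝ)/2 else 0) := by positivity
    have : (0:ℝ) ≤ (if y = j ∧ u' = u ∧ s = s₂ then (1:ℝ)/2 else 0) := by positivity
    simp only [hQ]
    positivity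
  have hKsum : ∀ s, ∑ v, K s v = 1 := by
    intro s; simp [hK]
  -- key: ∑ s, Q y u s * K s v = Q y u v
  have hkey : ∀ (y : Fin k) (v : S), (∑ s, Q y u s * K s v) = Q y u v := by
    intro y v
    simp [hK, mul_ite, mul_one, mul_zero]
  have hQi1 : Q i u s₁ = 1/2 := by
    simp [hQ, hji.symm, hs]
  have hQi2 : Q i u s₂ = 0 := by
    simp [hQ, hji.symm, hs.symm]
  have hQj2 : Q j u s₂ = 1/2 := by
    simp [hQ, hji, hs.symm]
  have hQother1 : ∀ j' : Fin k, j' ≠ i → Q j' u s₁ = 0 := by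
    intro j' hj'
    simp [hQ, hj', hs]
  refine ⟨Q, K, j, hji, hQnn, ?_, ?_, hKsum, ⟨s₁, ?_⟩, ⟨s₂, ?_⟩, ⟨s₁, ?_⟩, ⟨s₂, ?_⟩⟩
  · -- total mass
    simp only [hQ, Finset.sum_add_distrib]
    have e1 : (∑ y : Fin k, ∑ u' : U, ∑ s : S,
        (if y = i ∧ u' = u ∧ s = s₁ then (1:ℝ)/2 else 0)) = 1/2 := by
      simp [Finset.sum_ite_eq', ite_and]
    have e2 : (∑ y : Fin k, ∑ u' : U, ∑ s : S,
        (if y = j ∧ u' = u ∧ s = s₂ then (1:ℝ)/2 else 0)) = 1/2 := by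
      simp [Finset.sum_ite_eq', ite_and]
    rw [e1, e2]; norm_num
  · intro s v; simp only [hK]; positivity
  · rw [hQi1, hQother1 j hji]; norm_num
  · rw [hQi2, hQj2]; norm_num
  · intro j' hj'
    rw [hkey, hkey, hQi1, hQother1 j' hj']; norm_num
  · intro hcon
    have := hcon j hji
    rw [hkey, hkey, hQi2, hQj2] at this
    norm_num at this
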